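/- Let S be a finite metric state space with kernels P^π, P̂^π, reward R^π, terminal value V̄, and γ ∈ [0,1). Suppose each (H−h−1)-step model-based value V̂_{P̂,H−h−1} is K-Lipschitz. Then for each 0 ≤ h ≤ H−1, |U_h(s) − U_{h+1}(s)| ≤ K · γ^{h+1} · E_{s_h∼P_h^π(s)}[W(P^π(·|s_h), P̂^π(·|s_h))], where W is the Wasserstein-1 distance on distributions over S. -/
import Mathlib


open Finset

/-- `p` is a probability distribution on the finite set `S`. -/
def IsDist {S : Type*} [Fintype S] (p : S → ℝ) : Prop :=
  (∀ s, 0 ≤ p s) ∧ ∑ s, p s = 1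

/-- Expectation of `f` under the distribution `p`. -/
noncomputable def expect {S : Type*} [Fintype S] (p f : S → ℝ) : ℝ := ∑ s, p s * f s

/-- `iterK P t s s'` is the `t`-step transition probability of reaching `s'` from `s`
under the Markov kernel `P` (with `iterK P 0` the point mass). -/
noncomputable def iterK {S : Type*} [Fintype S] [DecidableEq S]
    (P : S → S → ℝ) : ℕ → S → S → ℝ
  | 0, s, s' => if s' = s then 1 else 0
  | (t+1), s, s' => ∑ u, P s u * iterK P t u s'

/-- The `H`-step model-based value:
`V̂_{Q,H}(s) = Σ_{t<H} γ^t E_{s_t∼Q_t(s)}[R(s_t)] + γ^H E_{s_H∼Q_H(s)}[V̄(s_H)]`. -/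
noncomputable def mbValue {S : Type*} [Fintype S] [DecidableEq S]
    (γ : ℝ) (R Vbar : S → ℝ) (Q : S → S → ℝ) (H : ℕ) (s : S) : ℝ :=
  ∑ t ∈ Finset.range H, γ ^ t * expect (iterK Q t s) R
    + γ ^ H * expect (iterK Q H s) Vbar

/-- The interpolant `U_h`: the `H`-step value expansion that rolls out the true kernel `P`
for the first `h` steps and the approximate kernel `Phat` for the remaining `H − h` steps. -/
noncomputable def interp {S : Type*} [Fintype S] [DecidableEq S]
    (γ : ℝ) (R Vbar : S → ℝ) (P Phat : S → S → ℝ) (H h : ℕ) (s : S) : ℝ :=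
  ∑ t ∈ Finset.range h, γ ^ t * expect (iterK P t s) R
    + ∑ t ∈ Finset.Ico h H, γ ^ t * ∑ s', iterK P h s s' * expect (iterK Phat (t - h) s') R
    + γ ^ H * ∑ s', iterK P h s s' * expect (iterK Phat (H - h) s') Vbar

/-- Wasserstein-1 distance in Kantorovich–Rubinstein dual form. -/
noncomputable def wass {S : Type*} [Fintype S] [MetricSpace S] (p q : S → ℝ) : ℝ :=
  ⨆ f : {f : S → ℝ // LipschitzWith 1 f}, (expect p f.1 - expect q f.1)

section Helpers
variable {S : Type*} [Fintype S] [DecidableEq S]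

lemma expect_add (p f g : S → ℝ) :
    _root_.expect p (fun u => f u + g u) = _root_.expect p f + _root_.expect p g := by
  simp [_root_.expect, mul_add, Finset.sum_add_distrib]

lemma expect_const_mul (p g : S → ℝ) (c : ℝ) :
    _root_.expect p (fun u => c * g u) = c * _root_.expect p g := by
  simp only [_root_.expect, Finset.mul_sum]
  exact Finset.sum_congr rfl fun u _ => by ring

lemma expect_sum_range (p : S → ℝ) (g : ℕ → S → ℝ) (n : ℕ) :
    _root_.expect p (fun u => ∑ t ∈ Finset.range n, g t u)
      = ∑ t ∈ Finset.range n, _root_.expect p (g t) := by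
  simp only [_root_.expect, Finset.mul_sum]
  exact Finset.sum_comm

lemma expect_iterK_zero (P : S → S → ℝ) (g : S → ℝ) (s : S) :
    _root_.expect (iterK P 0 s) g = g s := by
  simp [_root_.expect, iterK, ite_mul]

lemma expect_iterK_succ (P : S → S → ℝ) (g : S → ℝ) (t : ℕ) (s : S) :
    _root_.expect (iterK P (t+1) s) g = ∑ u, P s u * _root_.expect (iterK P t u) g := by
  simp only [_root_.expect, iterK, Finset.sum_mul, Finset.mul_sum, mul_assoc]
  exact Finset.sum_comm

lemma iterK_succ_right (P : S → S → ℝ) (t : ℕ) (s s' : S) :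
    iterK P (t+1) s s' = ∑ u, iterK P t s u * P u s' := by
  induction t generalizing s with
  | zero => simp [iterK, ite_mul]
  | succ t ih =>
      show (∑ u, P s u * iterK P (t+1) u s') = ∑ u, iterK P (t+1) s u * P u s'
      simp only [ih, show ∀ u, iterK P (t+1) s u = ∑ v, P s v * iterK P t v u from fun _ => rfl,
        Finset.mul_sum, Finset.sum_mul, mul_assoc]
      exact Finset.sum_comm

lemma iterK_nonneg (P : S → S → ℝ) (hP : ∀ s, IsDist (P s)) (t : ℕ) (s s' : S) :
    0 ≤ iterK P t s s' := by
  induction t generalizing s with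
  | zero => simp only [iterK]; positivity
  | succ t ih => exact Finset.sum_nonneg fun u _ => mul_nonneg ((hP s).1 u) (ih u)

lemma mbValue_succ (γ : ℝ) (R Vbar : S → ℝ) (Q : S → S → ℝ) (m : ℕ) (s : S) :
    mbValue γ R Vbar Q (m+1) s = R s + γ * _root_.expect (Q s) (mbValue γ R Vbar Q m) := by
  have key : _root_.expect (Q s) (mbValue γ R Vbar Q m)
      = ∑ t ∈ Finset.range m, γ ^ t * _root_.expect (iterK Q (t+1) s) R
        + γ ^ m * _root_.expect (iterK Q (m+1) s) Vbar := by
    show _root_.expect (Q s) (fun u => ∑ t ∈ Finset.range m,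
        γ ^ t * _root_.expect (iterK Q t u) R + γ ^ m * _root_.expect (iterK Q m u) Vbar) = _
    rw [expect_add, expect_sum_range]
    congr 1
    · exact Finset.sum_congr rfl fun t _ => by
        rw [expect_const_mul, expect_iterK_succ]; rfl
    · rw [expect_const_mul, expect_iterK_succ]; rfl
  rw [key, mbValue, Finset.sum_range_succ', mul_add, Finset.mul_sum, expect_iterK_zero,
    pow_zero, one_mul]
  rw [show γ * (γ ^ m * _root_.expect (iterK Q (m+1) s) Vbar)
      = γ ^ (m+1) * _root_.expect (iterK Q (m+1) s) Vbar by ring]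
  rw [Finset.sum_congr rfl (fun t _ => show γ * (γ ^ t * _root_.expect (iterK Q (t+1) s) R)
      = γ ^ (t+1) * _root_.expect (iterK Q (t+1) s) R by ring)]
  ring

lemma interp_eq (γ : ℝ) (R Vbar : S → ℝ) (P Phat : S → S → ℝ) (H h : ℕ) (hhH : h ≤ H) (s : S) :
    interp γ R Vbar P Phat H h s
      = ∑ t ∈ Finset.range h, γ ^ t * _root_.expect (iterK P t s) R
        + γ ^ h * ∑ u, iterK P h s u * mbValue γ R Vbar Phat (H - h) u := by
  rw [interp, Finset.sum_Ico_eq_sum_range, add_assoc]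
  congr 1
  have hsplit : ∀ u, iterK P h s u * mbValue γ R Vbar Phat (H - h) u
      = (∑ t ∈ Finset.range (H - h),
          γ ^ t * (iterK P h s u * _root_.expect (iterK Phat t u) R))
        + γ ^ (H - h) * (iterK P h s u * _root_.expect (iterK Phat (H - h) u) Vbar) := by
    intro u
    rw [mbValue, mul_add, Finset.mul_sum]
    congr 1
    · exact Finset.sum_congr rfl fun t _ => by ring
    · ring
  rw [Finset.sum_congr rfl fun u _ => hsplit u, Finset.sum_add_distrib, mul_add,
    Finset.sum_comm]
  congr 1
  · rw [Finset.mul_sum]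
    refine Finset.sum_congr rfl fun i hi => ?_
    rw [Nat.add_sub_cancel_left, pow_add, Finset.mul_sum, Finset.mul_sum]
    exact Finset.sum_congr rfl fun u _ => by ring
  · rw [Finset.mul_sum, Finset.mul_sum]
    refine Finset.sum_congr rfl fun u _ => ?_
    rw [show γ ^ h * (γ ^ (H - h) * (iterK P h s u * _root_.expect (iterK Phat (H - h) u) Vbar))
      = γ ^ (h + (H - h)) * (iterK P h s u * _root_.expect (iterK Phat (H - h) u) Vbar)
      by rw [pow_add]; ring, Nat.add_sub_cancel' hhH]

lemma interp_diff (γ : ℝ) (R Vbar : S → ℝ) (P Phat : S → S → ℝ) (H h : ℕ) (hh : h + 1 ≤ H)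
    (s : S) :
    interp γ R Vbar P Phat H h s - interp γ R Vbar P Phat H (h+1) s
      = γ ^ (h+1) * ∑ u, iterK P h s u *
          (_root_.expect (Phat u) (mbValue γ R Vbar Phat (H - h - 1))
            - _root_.expect (P u) (mbValue γ R Vbar Phat (H - h - 1))) := by
  have h1 : h ≤ H := le_trans (Nat.le_succ h) hh
  have hm : H - h = (H - h - 1) + 1 := by omega
  set m := H - h - 1 with hmdef
  have hm2 : H - (h + 1) = m := by omega
  rw [interp_eq γ R Vbar P Phat H h h1 s, interp_eq γ R Vbar P Phat H (h+1) hh s, hm2, hm,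
    Finset.sum_range_succ]
  have hstep : ∑ u, iterK P (h+1) s u * mbValue γ R Vbar Phat m u
      = ∑ w, iterK P h s w * _root_.expect (P w) (mbValue γ R Vbar Phat m) := by
    simp only [iterK_succ_right, Finset.sum_mul]
    rw [Finset.sum_comm]
    refine Finset.sum_congr rfl fun w _ => ?_
    rw [show _root_.expect (P w) (mbValue γ R Vbar Phat m)
      = ∑ u, P w u * mbValue γ R Vbar Phat m u from rfl, Finset.mul_sum]
    exact Finset.sum_congr rfl fun u _ => by ring
  rw [hstep, Finset.sum_congr rfl fun u _ =>
    congrArg (iterK P h s u * ·) (mbValue_succ γ R Vbar Phat m u)]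
  rw [show _root_.expect (iterK P h s) R = ∑ u, iterK P h s u * R u from rfl]
  have e1 : ∑ u, iterK P h s u * (R u + γ * _root_.expect (Phat u) (mbValue γ R Vbar Phat m))
      = (∑ u, iterK P h s u * R u)
        + γ * ∑ u, iterK P h s u * _root_.expect (Phat u) (mbValue γ R Vbar Phat m) := by
    rw [Finset.mul_sum, ← Finset.sum_add_distrib]
    exact Finset.sum_congr rfl fun u _ => by ring
  have e2 : ∑ u, iterK P h s u *
        (_root_.expect (Phat u) (mbValue γ R Vbar Phat m)
          - _root_.expect (P u) (mbValue γ R Vbar Phat m))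
      = (∑ u, iterK P h s u * _root_.expect (Phat u) (mbValue γ R Vbar Phat m))
        - ∑ u, iterK P h s u * _root_.expect (P u) (mbValue γ R Vbar Phat m) := by
    rw [← Finset.sum_sub_distrib]
    exact Finset.sum_congr rfl fun u _ => by ring
  rw [e1, e2]
  ring


variable [MetricSpace S]

lemma nonempty_of_dist (p : S → ℝ) (hp : IsDist p) : Nonempty S := by
  by_contra h
  rw [not_nonempty_iff] at h
  have := hp.2
  simp [Finset.univ_eq_empty] at this

lemma expect_sub_eq (p q f : S → ℝ) (hp : ∑ x, p x = 1) (hq : ∑ x, q x = 1) (s0 : S) :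
    _root_.expect p f - _root_.expect q f = ∑ x, (p x - q x) * (f x - f s0) := by
  simp only [sub_mul, mul_sub, Finset.sum_sub_distrib, ← Finset.sum_mul, hp, hq, one_mul,
    _root_.expect]
  ring

lemma expect_sub_le_of_lip (p q : S → ℝ) (hp : IsDist p) (hq : IsDist q) (s0 : S)
    (g : S → ℝ) (hg : LipschitzWith 1 g) :
    _root_.expect p g - _root_.expect q g ≤ ∑ x, |p x - q x| * dist x s0 := by
  rw [expect_sub_eq p q g hp.2 hq.2 s0]
  refine Finset.sum_le_sum fun x _ => ?_
  calc (p x - q x) * (g x - g s0) ≤ |(p x - q x) * (g x - g s0)| := le_abs_self _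
    _ = |p x - q x| * |g x - g s0| := abs_mul _ _
    _ ≤ |p x - q x| * dist x s0 := by
        refine mul_le_mul_of_nonneg_left ?_ (abs_nonneg _)
        have := hg.dist_le_mul x s0
        simpa [Real.dist_eq] using this

lemma wass_bddAbove (p q : S → ℝ) (hp : IsDist p) (hq : IsDist q) :
    BddAbove (Set.range fun f : {f : S → ℝ // LipschitzWith 1 f} =>
      _root_.expect p f.1 - _root_.expect q f.1) := by
  obtain ⟨s0⟩ := nonempty_of_dist p hp
  refine ⟨∑ x, |p x - q x| * dist x s0, ?_⟩
  rintro _ ⟨g, rfl⟩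
  exact expect_sub_le_of_lip p q hp hq s0 g.1 g.2

lemma le_wass (p q : S → ℝ) (hp : IsDist p) (hq : IsDist q)
    (g : S → ℝ) (hg : LipschitzWith 1 g) :
    _root_.expect p g - _root_.expect q g ≤ wass p q :=
  le_ciSup (wass_bddAbove p q hp hq) ⟨g, hg⟩

lemma wass_self (p : S → ℝ) : wass p p = 0 := by
  have : Nonempty {f : S → ℝ // LipschitzWith 1 f} :=
    ⟨⟨fun _ => 0, (LipschitzWith.const 0).weaken zero_le_one⟩⟩
  simp [wass]

lemma abs_expect_sub_le_wass (p q : S → ℝ) (hp : IsDist p) (hq : IsDist q)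
    (K : ℝ) (hK : 0 ≤ K) (f : S → ℝ) (hf : ∀ x y, |f x - f y| ≤ K * dist x y) :
    |_root_.expect p f - _root_.expect q f| ≤ K * wass p q := by
  rcases eq_or_lt_of_le hK with h0 | hKpos
  · obtain ⟨s0⟩ := nonempty_of_dist p hp
    have hconst : ∀ x, f x = f s0 := by
      intro x
      have hx := hf x s0
      rw [← h0, zero_mul] at hx
      have := abs_nonneg (f x - f s0)
      have : |f x - f s0| = 0 := le_antisymm hx this
      rw [abs_eq_zero, sub_eq_zero] at this
      exact this
    have hp' : _root_.expect p f = f s0 := by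
      rw [show _root_.expect p f = ∑ x, p x * f x from rfl,
        Finset.sum_congr rfl fun x _ => by rw [hconst x], ← Finset.sum_mul, hp.2, one_mul]
    have hq' : _root_.expect q f = f s0 := by
      rw [show _root_.expect q f = ∑ x, q x * f x from rfl,
        Finset.sum_congr rfl fun x _ => by rw [hconst x], ← Finset.sum_mul, hq.2, one_mul]
    rw [hp', hq', sub_self, abs_zero, ← h0, zero_mul]
  · set g : S → ℝ := fun x => K⁻¹ * f x with hgdef
    have hgsub : ∀ x y, |g x - g y| = K⁻¹ * |f x - f y| := by
      intro x y
      rw [show g x - g y = K⁻¹ * (f x - f y) by rw [hgdef]; ring, abs_mul,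
        abs_of_nonneg (inv_nonneg.2 hK)]
    have hg : LipschitzWith 1 g := by
      apply LipschitzWith.of_dist_le_mul
      intro x y
      rw [NNReal.coe_one, one_mul, Real.dist_eq, hgsub]
      calc K⁻¹ * |f x - f y| ≤ K⁻¹ * (K * dist x y) :=
            mul_le_mul_of_nonneg_left (hf x y) (inv_nonneg.2 hK)
        _ = dist x y := by field_simp
    have hg' : LipschitzWith 1 (fun x => -g x) := by
      apply LipschitzWith.of_dist_le_mul
      intro x y
      rw [NNReal.coe_one, one_mul, Real.dist_eq, show -g x - -g y = -(g x - g y) by ring,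
        abs_neg, hgsub]
      calc K⁻¹ * |f x - f y| ≤ K⁻¹ * (K * dist x y) :=
            mul_le_mul_of_nonneg_left (hf x y) (inv_nonneg.2 hK)
        _ = dist x y := by field_simp
    have h1 := le_wass p q hp hq g hg
    have h2 := le_wass p q hp hq (fun x => -g x) hg'
    have e1 : _root_.expect p g = K⁻¹ * _root_.expect p f := expect_const_mul p f K⁻¹
    have e2 : _root_.expect q g = K⁻¹ * _root_.expect q f := expect_const_mul q f K⁻¹
    have e3 : _root_.expect p (fun x => -g x) = -(K⁻¹ * _root_.expect p f) := by
      rw [show _root_.expect p (fun x => -g x) = ∑ x, p x * -(g x) from rfl]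
      simp only [mul_neg, Finset.sum_neg_distrib]
      rw [show (∑ x, p x * g x) = _root_.expect p g from rfl, e1]
    have e4 : _root_.expect q (fun x => -g x) = -(K⁻¹ * _root_.expect q f) := by
      rw [show _root_.expect q (fun x => -g x) = ∑ x, q x * -(g x) from rfl]
      simp only [mul_neg, Finset.sum_neg_distrib]
      rw [show (∑ x, q x * g x) = _root_.expect q g from rfl, e2]
    rw [e1, e2] at h1
    rw [e3, e4] at h2
    have hKinv : 0 < K⁻¹ := inv_pos.2 hKpos
    rw [abs_le]
    constructor
    · nlinarith [mul_le_mul_of_nonneg_left h2 hK, mul_inv_cancel₀ (ne_of_gt hKpos)]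
    · nlinarith [mul_le_mul_of_nonneg_left h1 hK, mul_inv_cancel₀ (ne_of_gt hKpos)]

end Helpers

/-- If the `(H−h−1)`-step model-based value under the approximate kernel is
`K`-Lipschitz, then for `0 ≤ h ≤ H−1`,
`|U_h(s) − U_{h+1}(s)| ≤ K γ^{h+1} E_{s_h∼P_h(s)}[W(P(·|s_h), P̂(·|s_h))]`. -/
theorem interp_succ_diff_le {S : Type*} [Fintype S] [DecidableEq S] [MetricSpace S]
    (γ : ℝ) (hγ : 0 ≤ γ ∧ γ < 1) (R Vbar : S → ℝ) (P Phat : S → S → ℝ)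
    (hP : ∀ s, IsDist (P s)) (hPhat : ∀ s, IsDist (Phat s))
    (K : ℝ) (H h : ℕ) (hh : h + 1 ≤ H)
    (hLip : ∀ s s', |mbValue γ R Vbar Phat (H - h - 1) s - mbValue γ R Vbar Phat (H - h - 1) s'|
      ≤ K * dist s s') (s : S) :
    |interp γ R Vbar P Phat H h s - interp γ R Vbar P Phat H (h+1) s| ≤
      K * γ ^ (h+1) * expect (iterK P h s) (fun u => wass (P u) (Phat u)) := by
  by_cases hK : 0 ≤ K
  · rw [interp_diff γ R Vbar P Phat H h hh s, abs_mul, abs_of_nonneg (pow_nonneg hγ.1 (h+1))]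
    calc γ ^ (h+1) * |∑ u, iterK P h s u *
          (_root_.expect (Phat u) (mbValue γ R Vbar Phat (H - h - 1))
            - _root_.expect (P u) (mbValue γ R Vbar Phat (H - h - 1)))|
        ≤ γ ^ (h+1) * ∑ u, iterK P h s u * (K * wass (P u) (Phat u)) := by
          refine mul_le_mul_of_nonneg_left ?_ (pow_nonneg hγ.1 _)
          refine le_trans (Finset.abs_sum_le_sum_abs _ _) (Finset.sum_le_sum fun u _ => ?_)
          rw [abs_mul, abs_of_nonneg (iterK_nonneg P hP h s u)]
          refine mul_le_mul_of_nonneg_left ?_ (iterK_nonneg P hP h s u)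
          rw [abs_sub_comm]
          exact abs_expect_sub_le_wass (P u) (Phat u) (hP u) (hPhat u) K hK _
            (fun x y => hLip x y)
      _ = K * γ ^ (h+1) * _root_.expect (iterK P h s) (fun u => wass (P u) (Phat u)) := by
          rw [show _root_.expect (iterK P h s) (fun u => wass (P u) (Phat u))
            = ∑ u, iterK P h s u * wass (P u) (Phat u) from rfl, Finset.mul_sum, Finset.mul_sum]
          exact Finset.sum_congr rfl fun u _ => by ring
  · push_neg at hK
    have hsub : ∀ x y : S, x = y := by
      intro x y
      by_contra hxy
      have h1 := hLip x y
      have h2 : 0 < dist x y := dist_pos.2 hxy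
      nlinarith [abs_nonneg (mbValue γ R Vbar Phat (H - h - 1) x
        - mbValue γ R Vbar Phat (H - h - 1) y)]
    have hPeq : P = Phat := by
      funext u v
      have hcard : (Finset.univ : Finset S) = {v} := by
        ext w; simp [hsub w v]
      have hPsum := (hP u).2
      have hPhsum := (hPhat u).2
      rw [hcard, Finset.sum_singleton] at hPsum hPhsum
      rw [hPsum, hPhsum]
    rw [interp_diff γ R Vbar P Phat H h hh s, hPeq]
    simp [wass_self, _root_.expect, sub_self]
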